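/- Let H be a subgroup of a topological group G admitting a countable neighborhood base {V_n : n ∈ ω} (of open sets containing H) with V_{n+1}² ⊆ V_n for all n. Then H is strongly neutral, the quotient map G → H\G is both closed and open, and H\G is metrizable. -/

import Mathlib

open scoped Pointwise
open Filter Set Uniformity Topology
open scoped SetRel

set_option maxHeartbeats 1000000 in
/-- if a subgroup `H` of a topological group `G` has a countable
neighborhood base `{V n}` of open sets with `V (n+1) * V (n+1) ⊆ V n`, then `H` is
strongly neutral, the quotient map `G → H\G` is closed and open, and `H\G` is
metrizable. -/
theorem stmt_10 {G : Type*} [Group G] [TopologicalSpace G] [IsTopologicalGroup G] [T2Space G]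
    (H : Subgroup G) (V : ℕ → Set G)
    (hopen : ∀ n, IsOpen (V n)) (hsub : ∀ n, (H : Set G) ⊆ V n)
    (hbase : ∀ O : Set G, IsOpen O → (H : Set G) ⊆ O → ∃ n, V n ⊆ O)
    (hsq : ∀ n, V (n + 1) * V (n + 1) ⊆ V n) :
    (∀ O : Set G, IsOpen O → (H : Set G) ⊆ O →
      ∃ W : Set G, IsOpen W ∧ (1 : G) ∈ W ∧ (H : Set G) * W ⊆ O) ∧
    IsClosedMap (Quotient.mk (QuotientGroup.rightRel H) : G → _) ∧
    IsOpenMap (Quotient.mk (QuotientGroup.rightRel H) : G → _) ∧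
    TopologicalSpace.MetrizableSpace (Quotient (QuotientGroup.rightRel H)) := by
  set mk : G → Quotient (QuotientGroup.rightRel H) := Quotient.mk (QuotientGroup.rightRel H)
    with hmkdef
  have hmkeq : ∀ x y : G, mk x = mk y ↔ y * x⁻¹ ∈ H := by
    intro x y
    rw [hmkdef, Quotient.eq]
    exact QuotientGroup.rightRel_apply
  have hquot : ∀ s : Set (Quotient (QuotientGroup.rightRel H)),
      IsOpen s ↔ IsOpen (mk ⁻¹' s) := fun s => isOpen_coinduced
  -- basic facts about V
  have hV1 : ∀ n, (1 : G) ∈ V n := fun n => hsub n H.one_mem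
  have hVmul : ∀ n, ∀ a b : G, a ∈ V (n + 1) → b ∈ V (n + 1) → a * b ∈ V n :=
    fun n a b ha hb => hsq n (Set.mul_mem_mul ha hb)
  -- the symmetrized sets W
  set W : ℕ → Set G := fun n => V n ∩ (V n)⁻¹ with hWdef
  have hWopen : ∀ n, IsOpen (W n) := fun n => (hopen n).inter (hopen n).inv
  have hWH : ∀ n, ∀ h : G, h ∈ H → h ∈ W n :=
    fun n h hh => ⟨hsub n hh, Set.mem_inv.2 (hsub n (H.inv_mem hh))⟩
  have hW1 : ∀ n, (1 : G) ∈ W n := fun n => hWH n 1 H.one_mem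
  have hWinv : ∀ n, ∀ a : G, a ∈ W n → a⁻¹ ∈ W n := by
    intro n a ha
    exact ⟨Set.mem_inv.1 ha.2, by simpa [Set.mem_inv] using ha.1⟩
  have hWmul : ∀ n, ∀ a b : G, a ∈ W (n + 1) → b ∈ W (n + 1) → a * b ∈ W n := by
    intro n a b ha hb
    refine ⟨hVmul n a b ha.1 hb.1, Set.mem_inv.2 ?_⟩
    rw [mul_inv_rev]
    exact hVmul n _ _ (Set.mem_inv.1 hb.2) (Set.mem_inv.1 ha.2)
  have hWmono : ∀ n, W (n + 1) ⊆ W n := fun n a ha => by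
    simpa using hWmul n a 1 ha (hW1 (n + 1))
  -- the sets S n = H * W n * H
  set S : ℕ → Set G := fun n => (H : Set G) * W n * (H : Set G) with hSdef
  have hSmem : ∀ n, ∀ z : G,
      z ∈ S n ↔ ∃ h₁ w h₂ : G, h₁ ∈ H ∧ w ∈ W n ∧ h₂ ∈ H ∧ h₁ * w * h₂ = z := by
    intro n z
    simp only [hSdef, Set.mem_mul]
    constructor
    · rintro ⟨-, ⟨h₁, hh₁, w, hw, rfl⟩, h₂, hh₂, rfl⟩
      exact ⟨h₁, w, h₂, hh₁, hw, hh₂, rfl⟩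
    · rintro ⟨h₁, w, h₂, hh₁, hw, hh₂, rfl⟩
      exact ⟨h₁ * w, ⟨h₁, hh₁, w, hw, rfl⟩, h₂, hh₂, rfl⟩
  have hSopen : ∀ n, IsOpen (S n) := fun n => ((hWopen n).mul_left).mul_right
  have hS1 : ∀ n, (1 : G) ∈ S n := fun n =>
    (hSmem n 1).2 ⟨1, 1, 1, H.one_mem, hW1 n, H.one_mem, by group⟩
  have hSinv : ∀ n, ∀ z : G, z ∈ S n → z⁻¹ ∈ S n := by
    intro n z hz
    obtain ⟨h₁, w, h₂, hh₁, hw, hh₂, rfl⟩ := (hSmem n z).1 hz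
    exact (hSmem n _).2 ⟨h₂⁻¹, w⁻¹, h₁⁻¹, H.inv_mem hh₂, hWinv n w hw, H.inv_mem hh₁, by group⟩
  have hSHl : ∀ n, ∀ h z : G, h ∈ H → z ∈ S n → h * z ∈ S n := by
    intro n h z hh hz
    obtain ⟨h₁, w, h₂, hh₁, hw, hh₂, rfl⟩ := (hSmem n z).1 hz
    exact (hSmem n _).2 ⟨h * h₁, w, h₂, H.mul_mem hh hh₁, hw, hh₂, by group⟩
  have hSHr : ∀ n, ∀ z h : G, z ∈ S n → h ∈ H → z * h ∈ S n := by
    intro n z h hz hh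
    obtain ⟨h₁, w, h₂, hh₁, hw, hh₂, rfl⟩ := (hSmem n z).1 hz
    exact (hSmem n _).2 ⟨h₁, w, h₂ * h, hh₁, hw, H.mul_mem hh₂ hh, by group⟩
  have hSmono : ∀ n, S (n + 1) ⊆ S n := by
    intro n z hz
    obtain ⟨h₁, w, h₂, hh₁, hw, hh₂, rfl⟩ := (hSmem (n + 1) z).1 hz
    exact (hSmem n _).2 ⟨h₁, w, h₂, hh₁, hWmono n hw, hh₂, rfl⟩
  have hSsubV : ∀ n, S (n + 2) ⊆ V n := by
    intro n z hz
    obtain ⟨h₁, w, h₂, hh₁, hw, hh₂, rfl⟩ := (hSmem (n + 2) z).1 hz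
    have : h₁ * w ∈ W (n + 1) := hWmul (n + 1) _ _ (hWH (n + 2) _ hh₁) hw
    exact (hWmul n _ _ this (hWmono (n + 1) (hWH (n + 2) _ hh₂))).1
  have hSsq : ∀ n, ∀ a b : G, a ∈ S (n + 2) → b ∈ S (n + 2) → a * b ∈ S n := by
    intro n a b ha hb
    obtain ⟨h₁, w, h₂, hh₁, hw, hh₂, rfl⟩ := (hSmem (n + 2) a).1 ha
    obtain ⟨h₃, w', h₄, hh₃, hw', hh₄, rfl⟩ := (hSmem (n + 2) b).1 hb
    refine (hSmem n _).2 ⟨h₁, w * ((h₂ * h₃) * w'), h₄, hh₁, ?_, hh₄, by group⟩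
    exact hWmul n _ _ (hWmono (n + 1) hw)
      (hWmul (n + 1) _ _ (hWH (n + 2) _ (H.mul_mem hh₂ hh₃)) hw')
  have hInter : ∀ z : G, (∀ n, z ∈ S n) → z ∈ H := by
    intro z hz
    by_contra hzH
    have hOop : IsOpen ({z}ᶜ : Set G) := isOpen_compl_singleton
    have hHsub : (H : Set G) ⊆ {z}ᶜ := by
      intro h hh hhz
      rw [Set.mem_singleton_iff] at hhz
      exact hzH (hhz ▸ hh)
    obtain ⟨n, hn⟩ := hbase _ hOop hHsub
    exact hn (hSsubV n (hz (n + 2))) rfl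
  -- saturation
  have hsat : ∀ A : Set G, mk ⁻¹' (mk '' A) = (H : Set G) * A := by
    intro A
    ext x
    simp only [Set.mem_preimage, Set.mem_image, Set.mem_mul]
    constructor
    · rintro ⟨u, hu, he⟩
      exact ⟨x * u⁻¹, (hmkeq u x).1 he, u, hu, by group⟩
    · rintro ⟨h, hh, u, hu, rfl⟩
      exact ⟨u, hu, (hmkeq u (h * u)).2 (by rwa [mul_inv_cancel_right])⟩
  -- Part 1 : strong neutrality
  have part1 : ∀ O : Set G, IsOpen O → (H : Set G) ⊆ O →
      ∃ Wo : Set G, IsOpen Wo ∧ (1 : G) ∈ Wo ∧ (H : Set G) * Wo ⊆ O := by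
    intro O hO hHO
    obtain ⟨n, hn⟩ := hbase O hO hHO
    refine ⟨V (n + 1), hopen _, hV1 _, ?_⟩
    rintro z ⟨h, hh, v, hv, rfl⟩
    exact hn (hVmul n h v (hsub _ hh) hv)
  -- Part : open map
  have part_open : IsOpenMap mk := by
    intro U hU
    rw [hquot, hsat]
    exact hU.mul_left
  -- Part : closed map
  have part_closed : IsClosedMap mk := by
    intro C hC
    rw [← isOpen_compl_iff, hquot, Set.preimage_compl, hsat]
    rw [isOpen_iff_forall_mem_open]
    intro x hx
    have hOop : IsOpen ((fun g => g * x) ⁻¹' Cᶜ) :=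
      hC.isOpen_compl.preimage (continuous_mul_right x)
    have hHsub : (H : Set G) ⊆ (fun g => g * x) ⁻¹' Cᶜ := by
      intro h hh hc
      exact hx ⟨h⁻¹, H.inv_mem hh, h * x, hc, by group⟩
    obtain ⟨n, hn⟩ := hbase _ hOop hHsub
    refine ⟨(fun g => g * x⁻¹) ⁻¹' V (n + 1), ?_,
      (hopen (n + 1)).preimage (continuous_mul_right x⁻¹), by simpa using hV1 (n + 1)⟩
    intro g hg
    rintro ⟨h, hh, c, hc, hgc⟩
    have hgc' : h * c = g := hgc
    have hcv : c = (h⁻¹ * (g * x⁻¹)) * x := by rw [← hgc']; group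
    rw [hcv] at hc
    exact hn (hVmul n _ _ (hsub _ (H.inv_mem hh)) hg) hc
  -- T0
  haveI hT0 : T0Space (Quotient (QuotientGroup.rightRel H)) := by
    refine (t0Space_iff_inseparable _).2 ?_
    intro a b hab
    obtain ⟨x, rfl⟩ := Quotient.exists_rep a
    obtain ⟨y, rfl⟩ := Quotient.exists_rep b
    have key : ∀ n, y * x⁻¹ ∈ S n := by
      intro n
      have hBopen : IsOpen {q | ∃ z ∈ S n, mk (z * x) = q} := by
        rw [hquot]
        have hpre : mk ⁻¹' {q | ∃ z ∈ S n, mk (z * x) = q}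
            = (fun g => g * x⁻¹) ⁻¹' S n := by
          ext g
          simp only [Set.mem_preimage, Set.mem_setOf_eq]
          constructor
          · rintro ⟨z, hz, he⟩
            have hH := (hmkeq (z * x) g).1 he
            have hg : g * x⁻¹ = (g * (z * x)⁻¹) * z := by group
            rw [hg]
            exact hSHl n _ z hH hz
          · intro hg
            exact ⟨g * x⁻¹, hg, (hmkeq (g * x⁻¹ * x) g).2 (by simpa using H.one_mem)⟩
        rw [hpre]
        exact (hSopen n).preimage (continuous_mul_right x⁻¹)
      have hmemx : mk x ∈ {q | ∃ z ∈ S n, mk (z * x) = q} :=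
        ⟨1, hS1 n, by rw [one_mul]⟩
      obtain ⟨z, hz, he⟩ := (hab.mem_open_iff hBopen).1 hmemx
      have hH := (hmkeq (z * x) (y)).1 he
      have hg : y * x⁻¹ = (y * (z * x)⁻¹) * z := by group
      rw [hg]
      exact hSHl n _ z hH hz
    exact (hmkeq x y).2 (hInter _ key)
  -- the entourages
  set D : ℕ → Set (Quotient (QuotientGroup.rightRel H) × Quotient (QuotientGroup.rightRel H)) :=
    fun n => {p | ∃ x y : G, p.1 = mk x ∧ p.2 = mk y ∧ y * x⁻¹ ∈ S n} with hDdef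
  have hD : ∀ n, ∀ x y : G, (mk x, mk y) ∈ D n ↔ y * x⁻¹ ∈ S n := by
    intro n x y
    constructor
    · rintro ⟨x', y', hx, hy, hs⟩
      have h1 : x' * x⁻¹ ∈ H := (hmkeq x x').1 hx
      have h2 : y * y'⁻¹ ∈ H := (hmkeq y' y).1 hy.symm
      have hg : y * x⁻¹ = (y * y'⁻¹) * (y' * x'⁻¹) * (x' * x⁻¹) := by group
      rw [hg]
      exact hSHr n _ _ (hSHl n _ _ h2 hs) h1
    · intro h
      exact ⟨x, y, rfl, rfl, h⟩
  have hDanti : Antitone D := by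
    refine antitone_nat_of_succ_le ?_
    rintro n p ⟨x, y, hx, hy, hs⟩
    exact ⟨x, y, hx, hy, hSmono n hs⟩
  have hdir : Directed (· ≥ ·) D := fun m n =>
    ⟨max m n, hDanti (le_max_left m n), hDanti (le_max_right m n)⟩
  have hFB : (⨅ n, 𝓟 (D n)).HasBasis (fun _ : ℕ => True) D := hasBasis_iInf_principal hdir
  -- the uniform core
  have refl : ∀ r ∈ (⨅ n, 𝓟 (D n)), ∀ q, (q, q) ∈ r := by
    intro r hr q
    obtain ⟨n, -, hn⟩ := hFB.mem_iff.1 hr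
    obtain ⟨x, rfl⟩ := Quotient.exists_rep q
    exact hn ((hD n x x).2 (by simpa using hS1 n))
  have symm : ∀ r ∈ (⨅ n, 𝓟 (D n)), Prod.swap ⁻¹' r ∈ (⨅ n, 𝓟 (D n)) := by
    intro r hr
    obtain ⟨n, -, hn⟩ := hFB.mem_iff.1 hr
    refine hFB.mem_iff.2 ⟨n, trivial, ?_⟩
    rintro ⟨a, b⟩ ⟨x, y, hx, hy, hs⟩
    exact hn ⟨y, x, hy, hx, by simpa [mul_inv_rev] using hSinv n _ hs⟩
  have comp : ∀ r ∈ (⨅ n, 𝓟 (D n)), ∃ t ∈ (⨅ n, 𝓟 (D n)), t ○ t ⊆ r := by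
    intro r hr
    obtain ⟨n, -, hn⟩ := hFB.mem_iff.1 hr
    refine ⟨D (n + 2), hFB.mem_iff.2 ⟨n + 2, trivial, subset_rfl⟩, ?_⟩
    rintro ⟨a, c⟩ ⟨b, ⟨x, y, hx, hy, h1⟩, ⟨y', z, hy', hz, h2⟩⟩
    apply hn
    have hyy : y' * y⁻¹ ∈ H := (hmkeq y y').1 (hy ▸ hy')
    refine ⟨x, z, hx, hz, ?_⟩
    have hg : z * x⁻¹ = (z * y'⁻¹) * ((y' * y⁻¹) * (y * x⁻¹)) := by group
    rw [hg]
    exact hSsq n _ _ h2 (hSHl (n + 2) _ _ hyy h1)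
  set core : UniformSpace.Core (Quotient (QuotientGroup.rightRel H)) :=
    UniformSpace.Core.mk' (⨅ n, 𝓟 (D n)) refl symm comp with hcoredef
  -- topology agreement
  have htopeq : (instTopologicalSpaceQuotient :
      TopologicalSpace (Quotient (QuotientGroup.rightRel H))) = core.toTopologicalSpace := by
    refine TopologicalSpace.ext_iff.2 fun s => ?_
    have hc : IsOpen[core.toTopologicalSpace] s ↔
        ∀ a ∈ s, s ∈ comap (Prod.mk a) (⨅ n, 𝓟 (D n)) := Iff.rfl
    rw [hc]
    constructor
    · intro hs a ha
      obtain ⟨x, rfl⟩ := Quotient.exists_rep a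
      have hOp : IsOpen ((fun g => g * x) ⁻¹' (mk ⁻¹' s)) :=
        ((hquot s).1 hs).preimage (continuous_mul_right x)
      have hHsub : (H : Set G) ⊆ (fun g => g * x) ⁻¹' (mk ⁻¹' s) := by
        intro h hh
        have : mk (h * x) = mk x := ((hmkeq x (h * x)).2 (by rwa [mul_inv_cancel_right])).symm
        show mk (h * x) ∈ s
        rw [this]; exact ha
      obtain ⟨m, hm⟩ := hbase _ hOp hHsub
      rw [(hFB.comap (Prod.mk (mk x))).mem_iff]
      refine ⟨m + 2, trivial, ?_⟩
      rintro b ⟨x', y, hx', hy, hs'⟩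
      have h1 : x' * x⁻¹ ∈ H := (hmkeq x x').1 hx'
      have h2 : y * x⁻¹ ∈ S (m + 2) := by
        have hg : y * x⁻¹ = (y * x'⁻¹) * (x' * x⁻¹) := by group
        rw [hg]; exact hSHr (m + 2) _ _ hs' h1
      have h3 : (y * x⁻¹) * x ∈ mk ⁻¹' s := hm (hSsubV m h2)
      have : mk y ∈ s := by simpa using h3
      have hy2 : b = mk y := hy
      rw [hy2]; exact this
    · intro hcore
      rw [hquot, isOpen_iff_forall_mem_open]
      intro x hx
      have hmem := hcore (mk x) hx
      rw [(hFB.comap (Prod.mk (mk x))).mem_iff] at hmem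
      obtain ⟨n, -, hn⟩ := hmem
      refine ⟨(fun g => g * x⁻¹) ⁻¹' S n, ?_,
        (hSopen n).preimage (continuous_mul_right x⁻¹), by simpa using hS1 n⟩
      intro g hg
      exact hn ((hD n x g).2 hg)
  letI U : UniformSpace (Quotient (QuotientGroup.rightRel H)) :=
    UniformSpace.ofCoreEq core _ htopeq
  haveI hcg : Filter.IsCountablyGenerated (uniformity (Quotient (QuotientGroup.rightRel H))) := by
    have : uniformity (Quotient (QuotientGroup.rightRel H)) = ⨅ n, 𝓟 (D n) := rfl
    rw [this]
    infer_instance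
  exact ⟨part1, part_closed, part_open, UniformSpace.metrizableSpace⟩
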